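/- Fix n ≥ 1. For any partition of the index set {1,…,n} into a k-element subset I and its complement Ī, and any rational function f(z₁,…,zₙ) symmetric separately in the first k and last n−k arguments, the localization sum Σ_{I ∈ [n,k]} f(α_I; α_Ī)/∏_{i∈I, j∈Ī}(1 − α_i/α_j) is a symmetric rational function of (α₁,…,αₙ): it is invariant under every permutation of the αᵢ. -/
import Mathlib

lemma compl_image_perm {n : ℕ} (π : Equiv.Perm (Fin n)) (I : Finset (Fin n)) :
    (I.image π)ᶜ = Iᶜ.image π := by
  ext x
  simp only [Finset.mem_compl, Finset.mem_image]
  constructor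
  · intro h
    exact ⟨π.symm x, fun hx => h ⟨π.symm x, hx, π.apply_symm_apply x⟩, π.apply_symm_apply x⟩
  · rintro ⟨y, hy, rfl⟩ ⟨z, hz, hzy⟩
    exact hy (π.injective hzy ▸ hz)

lemma key_perm {F : Type*} {n k : ℕ} (β : Fin n → F) (π : Equiv.Perm (Fin n))
    (S T : Finset (Fin n)) (hS : S.card = k) (hT : T.card = k) (him : S.image π = T) :
    ∃ σ : Equiv.Perm (Fin k),
      ∀ j, β (π ((S.orderIsoOfFin hS j : S) : Fin n))
        = β ((T.orderIsoOfFin hT (σ j) : T) : Fin n) := by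
  have hm : ∀ j : Fin k, π ((S.orderIsoOfFin hS j : S) : Fin n) ∈ T := fun j => by
    rw [← him]; exact Finset.mem_image_of_mem _ (S.orderIsoOfFin hS j).2
  set m : Fin k → Fin k := fun j => (T.orderIsoOfFin hT).symm ⟨_, hm j⟩ with hmdef
  have hinj : Function.Injective m := by
    intro a b hab
    have h2 : (⟨_, hm a⟩ : T) = ⟨_, hm b⟩ := (T.orderIsoOfFin hT).symm.injective hab
    exact (S.orderIsoOfFin hS).injective (Subtype.ext (π.injective (Subtype.ext_iff.mp h2)))
  refine ⟨Equiv.ofBijective m (Finite.injective_iff_bijective.mp hinj), fun j => ?_⟩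
  have : T.orderIsoOfFin hT (m j) = ⟨_, hm j⟩ := (T.orderIsoOfFin hT).apply_symm_apply _
  rw [Equiv.ofBijective_apply, this]



/-- The localization sum `Σ_{I∈[n,k]} f(α_I; α_Ī)/∏_{i∈I,j∈Ī}(1 - αᵢ/αⱼ)`, where for each
`k`-subset `I` the slots of `f` are filled using the monotone enumerations of `I` and its
complement. -/
noncomputable def locSum {F : Type*} [Field F] (n k : ℕ) (hk : k ≤ n)
    (f : (Fin k → F) → (Fin (n - k) → F) → F) (α : Fin n → F) : F :=
  ∑ I ∈ (Finset.powersetCard k (Finset.univ : Finset (Fin n))).attach,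
    f (fun j => α ((I.1.orderIsoOfFin ((Finset.mem_powersetCard.mp I.2).2) j : I.1) : Fin n))
      (fun j => α ((I.1ᶜ.orderIsoOfFin
        (by rw [Finset.card_compl, (Finset.mem_powersetCard.mp I.2).2, Fintype.card_fin])
        j : (I.1ᶜ : Finset (Fin n))) : Fin n)) /
    ∏ i ∈ I.1, ∏ j ∈ I.1ᶜ, (1 - α i / α j)

/-- For `f` symmetric separately in its first `k` and last `n-k` arguments, and distinct
nonzero `α₁,…,αₙ`, the localization sum is a symmetric function of `(α₁,…,αₙ)`: it is
invariant under every permutation of the `αᵢ`. -/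
theorem stmt_14 {F : Type*} [Field F] (n k : ℕ) (hk : k ≤ n)
    (f : (Fin k → F) → (Fin (n - k) → F) → F)
    (hsym : ∀ (x : Fin k → F) (y : Fin (n - k) → F)
        (σ : Equiv.Perm (Fin k)) (τ : Equiv.Perm (Fin (n - k))),
        f (x ∘ σ) (y ∘ τ) = f x y)
    (α : Fin n → F) (hinj : Function.Injective α) (h0 : ∀ i, α i ≠ 0)
    (π : Equiv.Perm (Fin n)) :
    locSum n k hk f (α ∘ π) = locSum n k hk f α := by
  classical
  set P := Finset.powersetCard k (Finset.univ : Finset (Fin n)) with hP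
  have hmem : ∀ (ρ : Equiv.Perm (Fin n)) (I : Finset (Fin n)), I ∈ P → I.image ρ ∈ P := by
    intro ρ I hI
    rw [hP, Finset.mem_powersetCard_univ] at *
    rw [Finset.card_image_of_injective _ ρ.injective]
    exact hI
  let ε : {I // I ∈ P} ≃ {I // I ∈ P} :=
    { toFun := fun I => ⟨I.1.image π, hmem π I.1 I.2⟩
      invFun := fun I => ⟨I.1.image ⇑π.symm, hmem π.symm I.1 I.2⟩
      left_inv := fun I => Subtype.ext (by simp [Finset.image_image])
      right_inv := fun I => Subtype.ext (by simp [Finset.image_image]) }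
  unfold locSum
  refine Fintype.sum_equiv ε _ _ ?_
  intro I
  have hI : I.1.card = k := (Finset.mem_powersetCard.mp I.2).2
  have hT : (I.1.image π).card = k := by
    rw [Finset.card_image_of_injective _ π.injective]; exact hI
  have hIc : I.1ᶜ.card = n - k := by
    rw [Finset.card_compl, hI, Fintype.card_fin]
  have hTc : (I.1.image π)ᶜ.card = n - k := by
    rw [Finset.card_compl, hT, Fintype.card_fin]
  obtain ⟨σ, hσ⟩ := key_perm α π I.1 (I.1.image π) hI hT rfl
  obtain ⟨τ, hτ⟩ := key_perm α π I.1ᶜ (I.1.image π)ᶜ hIc hTc (compl_image_perm π I.1).symm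
  simp only [ε, Equiv.coe_fn_mk]
  congr 1
  · have hA : (fun j => (α ∘ π) ((I.1.orderIsoOfFin hI j : I.1) : Fin n))
        = (fun j => α (((I.1.image π).orderIsoOfFin hT j : (I.1.image π : Finset (Fin n))) : Fin n)) ∘ σ :=
      funext fun j => hσ j
    have hB : (fun j => (α ∘ π) ((I.1ᶜ.orderIsoOfFin hIc j : (I.1ᶜ : Finset (Fin n))) : Fin n))
        = (fun j => α ((((I.1.image π)ᶜ).orderIsoOfFin hTc j : ((I.1.image π)ᶜ : Finset (Fin n))) : Fin n)) ∘ τ :=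
      funext fun j => hτ j
    rw [hA, hB, hsym]
  · rw [compl_image_perm, Finset.prod_image (fun x _ y _ h => π.injective h)]
    refine Finset.prod_congr rfl fun i _ => ?_
    rw [Finset.prod_image (fun x _ y _ h => π.injective h)]
    rfl
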